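/- Shifting indices distributes over makeIndices: for strings x, y, target tg, and naturals lo ≤ hi with length y ≥ 1, map (fun i => i + length x) (makeIndices y tg lo hi) = makeIndices (x ++ y) tg (length x + lo) (length x + hi). -/

import Mathlib

/-- `subString o l s = take l (drop o s)` -/
def subString (o l : ℕ) (s : List Char) : List Char := (s.drop o).take l

/-- `i` is a good index of `s` for target `tg`. -/
def goodIndex (s tg : List Char) (i : ℕ) : Prop :=
  subString i tg.length s = tg ∧ i + tg.length ≤ s.length

instance (s tg : List Char) (i : ℕ) : Decidable (goodIndex s tg i) := by
  unfold goodIndex; exact instDecidableAnd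

/-- Collect all good indices of `s` for `tg` in the range `[lo, hi]`. -/
def makeIndices (s tg : List Char) (lo : ℕ) (hi : ℤ) : List ℕ :=
  if hi < lo then []
  else if goodIndex s tg lo then lo :: makeIndices s tg (lo + 1) hi
  else makeIndices s tg (lo + 1) hi
termination_by (hi + 1 - lo).toNat
decreasing_by all_goals (rename_i h _; omega)

def makeNewIndices (sl sr tg : List Char) : List ℕ :=
  if 2 ≤ tg.length then
    makeIndices (sl ++ sr) tg (max (sl.length - (tg.length - 1)) 0)
      ((sl.length : ℤ) - 1)
  else []

lemma goodIndex_shift (x y tg : List Char) (i : ℕ) :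
    goodIndex y tg i ↔ goodIndex (x ++ y) tg (x.length + i) := by
  unfold goodIndex subString
  rw [List.drop_length_add_append, List.length_append]
  constructor <;> rintro ⟨h, h'⟩ <;> exact ⟨h, by omega⟩

lemma makeIndices_shift_aux (x y tg : List Char) (lo : ℕ) (hi : ℤ) :
    (makeIndices y tg lo hi).map (fun i => i + x.length) =
      makeIndices (x ++ y) tg (x.length + lo) ((x.length : ℤ) + hi) := by
  generalize hn : (hi + 1 - lo).toNat = n
  induction n generalizing lo with
  | zero =>
      conv_lhs => rw [makeIndices]
      conv_rhs => rw [makeIndices]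
      rw [if_pos (show hi < (lo:ℤ) by omega),
        if_pos (show (x.length:ℤ) + hi < ((x.length + lo : ℕ):ℤ) by push_cast; omega)]
      rfl
  | succ n ih =>
      conv_lhs => rw [makeIndices]
      conv_rhs => rw [makeIndices]
      by_cases hlt : hi < (lo:ℤ)
      · rw [if_pos hlt,
          if_pos (show (x.length:ℤ) + hi < ((x.length + lo : ℕ):ℤ) by push_cast; omega)]
        rfl
      · rw [if_neg hlt,
          if_neg (show ¬((x.length:ℤ) + hi < ((x.length + lo : ℕ):ℤ)) by push_cast; omega)]
        have hg := goodIndex_shift x y tg lo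
        by_cases hgi : goodIndex y tg lo
        · rw [if_pos hgi, if_pos (hg.mp hgi), List.map_cons]
          have := ih (lo + 1) (by omega)
          rw [this]
          congr 1
          omega
        · rw [if_neg hgi, if_neg (fun h => hgi (hg.mpr h))]
          have := ih (lo + 1) (by omega)
          rw [this]
          congr 1

theorem makeIndices_shift (x y tg : List Char) (lo hi : ℕ)
    (h1 : lo ≤ hi) (h2 : 1 ≤ y.length) :
    (makeIndices y tg lo (hi : ℤ)).map (fun i => i + x.length) =
      makeIndices (x ++ y) tg (x.length + lo) ((x.length : ℤ) + (hi : ℤ)) := by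
  simpa using makeIndices_shift_aux x y tg lo hi
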